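/- arXiv:1201.4326 — 3 statements merged into one kernel-verified Lean document; each statement's English description precedes it below -/
import Mathlib

section
/- There is no homomorphism from the 3-graph H7 to any blow-up of a single 3-edge. Precisely: there is no function f from the vertex set {1,...,7} of H7 to a set A ⊔ B ⊔ C partitioned into three parts such that every edge {x,y,z} of H7 has f(x), f(y), f(z) lying in three distinct parts, where H7 is the 3-graph on {1,...,7} with edges 124, 137, 156, 235, 267, 346, 457, 653, 647, 621, 542, 517, 431, 327. -/
/-- The 3-graph `H₇` on vertex set `{1, ..., 7}` with 14 edges. -/
def H7 : Finset (Finset ℕ) :=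
  {{1,2,4}, {1,3,7}, {1,5,6}, {2,3,5}, {2,6,7}, {3,4,6}, {4,5,7},
   {6,5,3}, {6,4,7}, {6,2,1}, {5,4,2}, {5,1,7}, {4,3,1}, {3,2,7}}

lemma rainbow (g : ℕ → Fin 3) (a b c x y z : ℕ)
    (he : ({a,b,c} : Finset ℕ) = {x,y,z}) (hx : g x = 0) (hy : g y = 1) (hz : g z = 2)
    (hab : a ≠ b) (hac : a ≠ c) (hbc : b ≠ c) :
    g a ≠ g b ∧ g a ≠ g c ∧ g b ≠ g c := by
  have ha : a = x ∨ a = y ∨ a = z := by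
    have : a ∈ ({x,y,z} : Finset ℕ) := he ▸ (by simp)
    simpa using this
  have hb : b = x ∨ b = y ∨ b = z := by
    have : b ∈ ({x,y,z} : Finset ℕ) := he ▸ (by simp)
    simpa using this
  have hc : c = x ∨ c = y ∨ c = z := by
    have : c ∈ ({x,y,z} : Finset ℕ) := he ▸ (by simp)
    simpa using this
  refine ⟨?_, ?_, ?_⟩ <;>
    rcases ha with rfl|rfl|rfl <;> rcases hb with rfl|rfl|rfl <;>
    rcases hc with rfl|rfl|rfl <;> simp_all

set_option maxRecDepth 100000 in
set_option synthInstance.maxSize 4000 in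
set_option synthInstance.maxHeartbeats 1000000 in
lemma key : ∀ v1 v2 v3 v4 v5 v6 v7 : Fin 3, ¬ (v1 ≠ v2 ∧ v1 ≠ v4 ∧ v2 ≠ v4 ∧ v1 ≠ v3 ∧ v1 ≠ v7 ∧ v3 ≠ v7 ∧ v1 ≠ v5 ∧ v1 ≠ v6 ∧ v5 ≠ v6 ∧ v2 ≠ v3 ∧ v2 ≠ v5 ∧ v3 ≠ v5 ∧ v2 ≠ v6 ∧ v2 ≠ v7 ∧ v6 ≠ v7 ∧ v3 ≠ v4 ∧ v3 ≠ v6 ∧ v4 ≠ v6 ∧ v4 ≠ v5 ∧ v4 ≠ v7 ∧ v5 ≠ v7 ∧ v6 ≠ v5 ∧ v6 ≠ v3 ∧ v5 ≠ v3 ∧ v6 ≠ v4 ∧ v6 ≠ v7 ∧ v4 ≠ v7 ∧ v6 ≠ v2 ∧ v6 ≠ v1 ∧ v2 ≠ v1 ∧ v5 ≠ v4 ∧ v5 ≠ v2 ∧ v4 ≠ v2 ∧ v5 ≠ v1 ∧ v5 ≠ v7 ∧ v1 ≠ v7 ∧ v4 ≠ v3 ∧ v4 ≠ v1 ∧ v3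 ≠ v1 ∧ v3 ≠ v2 ∧ v3 ≠ v7 ∧ v2 ≠ v7) := by decide

/-- There is no homomorphism from `H₇` into a blow-up of a single 3-edge: for any set `V`
partitioned into three parts `A`, `B`, `C`, there is no map `f` sending the three vertices
of every edge of `H₇` into three distinct parts. -/
theorem no_hom_H7_to_edge_blowup (V : Type*) (A B C : Set V)
    (hcover : ∀ v : V, v ∈ A ∨ v ∈ B ∨ v ∈ C)
    (hAB : Disjoint A B) (hAC : Disjoint A C) (hBC : Disjoint B C) :
    ¬ ∃ f : ℕ → V, ∀ e ∈ H7, ∃ x y z : ℕ,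
      e = {x, y, z} ∧ f x ∈ A ∧ f y ∈ B ∧ f z ∈ C := by
  rintro ⟨f, hf⟩
  classical
  set col : ℕ → Fin 3 := fun n => if f n ∈ A then 0 else if f n ∈ B then 1 else 2 with hcol
  have colA : ∀ n, f n ∈ A → col n = 0 := fun n h => by simp [hcol, h]
  have colB : ∀ n, f n ∈ B → col n = 1 := fun n h => by
    have hA : f n ∉ A := fun hA => hAB.ne_of_mem hA h rfl
    simp [hcol, hA, h]
  have colC : ∀ n, f n ∈ C → col n = 2 := fun n h => by
    have hA : f n ∉ A := fun hA => hAC.ne_of_mem hA h rfl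
    have hB : f n ∉ B := fun hB => hBC.ne_of_mem hB h rfl
    simp [hcol, hA, hB]
  obtain ⟨x0, y0, z0, he0, hx0, hy0, hz0⟩ := hf {1,2,4} (by decide)
  have E0 := rainbow col 1 2 4 x0 y0 z0 he0 (colA _ hx0) (colB _ hy0) (colC _ hz0) (by decide) (by decide) (by decide)
  obtain ⟨x1, y1, z1, he1, hx1, hy1, hz1⟩ := hf {1,3,7} (by decide)
  have E1 := rainbow col 1 3 7 x1 y1 z1 he1 (colA _ hx1) (colB _ hy1) (colC _ hz1) (by decide) (by decide) (by decide)
  obtain ⟨x2, y2, z2, he2, hx2, hy2, hz2⟩ := hf {1,5,6} (by decide)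
  have E2 := rainbow col 1 5 6 x2 y2 z2 he2 (colA _ hx2) (colB _ hy2) (colC _ hz2) (by decide) (by decide) (by decide)
  obtain ⟨x3, y3, z3, he3, hx3, hy3, hz3⟩ := hf {2,3,5} (by decide)
  have E3 := rainbow col 2 3 5 x3 y3 z3 he3 (colA _ hx3) (colB _ hy3) (colC _ hz3) (by decide) (by decide) (by decide)
  obtain ⟨x4, y4, z4, he4, hx4, hy4, hz4⟩ := hf {2,6,7} (by decide)
  have E4 := rainbow col 2 6 7 x4 y4 z4 he4 (colA _ hx4) (colB _ hy4) (colC _ hz4) (by decide) (by decide) (by decide)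
  obtain ⟨x5, y5, z5, he5, hx5, hy5, hz5⟩ := hf {3,4,6} (by decide)
  have E5 := rainbow col 3 4 6 x5 y5 z5 he5 (colA _ hx5) (colB _ hy5) (colC _ hz5) (by decide) (by decide) (by decide)
  obtain ⟨x6, y6, z6, he6, hx6, hy6, hz6⟩ := hf {4,5,7} (by decide)
  have E6 := rainbow col 4 5 7 x6 y6 z6 he6 (colA _ hx6) (colB _ hy6) (colC _ hz6) (by decide) (by decide) (by decide)
  obtain ⟨x7, y7, z7, he7, hx7, hy7, hz7⟩ := hf {6,5,3} (by decide)
  have E7 := rainbow col 6 5 3 x7 y7 z7 he7 (colA _ hx7) (colB _ hy7) (colC _ hz7) (by decide) (by decide) (by decide)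
  obtain ⟨x8, y8, z8, he8, hx8, hy8, hz8⟩ := hf {6,4,7} (by decide)
  have E8 := rainbow col 6 4 7 x8 y8 z8 he8 (colA _ hx8) (colB _ hy8) (colC _ hz8) (by decide) (by decide) (by decide)
  obtain ⟨x9, y9, z9, he9, hx9, hy9, hz9⟩ := hf {6,2,1} (by decide)
  have E9 := rainbow col 6 2 1 x9 y9 z9 he9 (colA _ hx9) (colB _ hy9) (colC _ hz9) (by decide) (by decide) (by decide)
  obtain ⟨x10, y10, z10, he10, hx10, hy10, hz10⟩ := hf {5,4,2} (by decide)
  have E10 := rainbow col 5 4 2 x10 y10 z10 he10 (colA _ hx10) (colB _ hy10) (colC _ hz10) (by decide) (by decide) (by decide)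
  obtain ⟨x11, y11, z11, he11, hx11, hy11, hz11⟩ := hf {5,1,7} (by decide)
  have E11 := rainbow col 5 1 7 x11 y11 z11 he11 (colA _ hx11) (colB _ hy11) (colC _ hz11) (by decide) (by decide) (by decide)
  obtain ⟨x12, y12, z12, he12, hx12, hy12, hz12⟩ := hf {4,3,1} (by decide)
  have E12 := rainbow col 4 3 1 x12 y12 z12 he12 (colA _ hx12) (colB _ hy12) (colC _ hz12) (by decide) (by decide) (by decide)
  obtain ⟨x13, y13, z13, he13, hx13, hy13, hz13⟩ := hf {3,2,7} (by decide)
  have E13 := rainbow col 3 2 7 x13 y13 z13 he13 (colA _ hx13) (colB _ hy13) (colC _ hz13) (by decide) (by decide) (by decide)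
  exact key (col 1) (col 2) (col 3) (col 4) (col 5) (col 6) (col 7) ⟨E0.1, E0.2.1, E0.2.2, E1.1, E1.2.1, E1.2.2, E2.1, E2.2.1, E2.2.2, E3.1, E3.2.1, E3.2.2, E4.1, E4.2.1, E4.2.2, E5.1, E5.2.1, E5.2.2, E6.1, E6.2.1, E6.2.2, E7.1, E7.2.1, E7.2.2, E8.1, E8.2.1, E8.2.2, E9.1, E9.2.1, E9.2.2, E10.1, E10.2.1, E10.2.2, E11.1, E11.2.1, E11.2.2, E12.1, E12.2.1, E12.2.2, E13.1, E13.2.1, E13.2.2⟩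
end

section
/- The inducibility of the 3-graph 4.2 equals 3/4; that is, lim_{n→∞} (max over all 3-graphs G on n vertices of e_{4.2}(G))/C(n,4) = 3/4. -/
/-- A 3-graph on vertex set `Fin n`, given by its edge set: every edge has 3 vertices. -/
def IsThreeGraph {n : ℕ} (G : Finset (Finset (Fin n))) : Prop :=
  ∀ e ∈ G, e.card = 3

/-- `G` contains a (not necessarily induced) subgraph isomorphic to `F`. -/
def ContainsCopy {m n : ℕ} (F : Finset (Finset (Fin m))) (G : Finset (Finset (Fin n))) : Prop :=
  ∃ f : Fin m ↪ Fin n, ∀ e ∈ F, e.map f ∈ G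

/-- `G` is `𝓕`-free: it contains no member of the family `𝓕` as a subgraph. -/
def FamilyFree {n : ℕ} (𝓕 : Set ((m : ℕ) × Finset (Finset (Fin m))))
    (G : Finset (Finset (Fin n))) : Prop :=
  ∀ F ∈ 𝓕, ¬ ContainsCopy F.2 G

/-- The vertex set `S` induces a copy of `H` in `G`. -/
def InducesCopy {h n : ℕ} (H : Finset (Finset (Fin h))) (G : Finset (Finset (Fin n)))
    (S : Finset (Fin n)) : Prop :=
  ∃ f : Fin h ↪ Fin n, Finset.univ.map f = S ∧
    ∀ e : Finset (Fin h), e.card = 3 → (e ∈ H ↔ e.map f ∈ G)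

/-- `e_H(G)`: the number of `h`-element vertex subsets of `G` inducing a copy of `H`. -/
noncomputable def eH {h n : ℕ} (H : Finset (Finset (Fin h)))
    (G : Finset (Finset (Fin n))) : ℕ :=
  Set.ncard {S : Finset (Fin n) | InducesCopy H G S}

/-- The Turán `H`-number `ex_H(n, 𝓕)`: the maximum number of induced copies of `H`
in an `𝓕`-free 3-graph on `n` vertices. -/
noncomputable def exH {h : ℕ} (H : Finset (Finset (Fin h)))
    (𝓕 : Set ((m : ℕ) × Finset (Finset (Fin m)))) (n : ℕ) : ℕ :=
  sSup {k : ℕ | ∃ G : Finset (Finset (Fin n)),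
    IsThreeGraph G ∧ FamilyFree 𝓕 G ∧ eH H G = k}

/-- The complete 3-graph on 4 vertices. -/
def K4 : Finset (Finset (Fin 4)) := {{0,1,2}, {0,1,3}, {0,2,3}, {1,2,3}}

/-- The 3-graph on 4 vertices with exactly three edges. -/
def K4minus : Finset (Finset (Fin 4)) := {{0,1,2}, {0,1,3}, {0,2,3}}

/-- The 3-graph `4.2` on 4 vertices with exactly two edges. -/
def FourTwo : Finset (Finset (Fin 4)) := {{0,1,2}, {0,1,3}}

/-- The strong 5-cycle. -/
def C5 : Finset (Finset (Fin 5)) := {{0,1,2}, {1,2,3}, {2,3,4}, {3,4,0}, {4,0,1}}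

/-- The 3-graph `F_{3,2}`. -/
def F32 : Finset (Finset (Fin 5)) := {{0,1,2}, {0,1,3}, {0,1,4}, {2,3,4}}


open Finset

namespace IndAux

variable {n : ℕ}

/-- number of edges of `G` inside the 4-set `S` (counting only 3-element subsets). -/
def w (G : Finset (Finset (Fin n))) (S : Finset (Fin n)) : ℕ :=
  ((S.powersetCard 3).filter (· ∈ G)).card

/-- codegree of a pair -/
def dG (G : Finset (Finset (Fin n))) (p : Finset (Fin n)) : ℕ :=
  (((Finset.univ : Finset (Fin n)).powersetCard 3).filter (fun t => p ⊆ t ∧ t ∈ G)).card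

lemma card_three_supsets (p : Finset (Fin n)) (hp : p.card = 2) :
    (((Finset.univ : Finset (Fin n)).powersetCard 3).filter (fun t => p ⊆ t)).card = n - 2 := by
  have himg : ((Finset.univ : Finset (Fin n)).powersetCard 3).filter (fun t => p ⊆ t)
      = (Finset.univ \ p).image (fun z => insert z p) := by
    ext t
    simp only [mem_filter, mem_powersetCard, mem_image, mem_sdiff, mem_univ, true_and]
    constructor
    · rintro ⟨⟨-, hc⟩, hpt⟩
      have h1 : (t \ p).card = 1 := by
        rw [card_sdiff_of_subset hpt, hc, hp]
      obtain ⟨z, hz⟩ := Finset.card_eq_one.mp h1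
      have hzt : z ∈ t \ p := hz ▸ Finset.mem_singleton_self z
      refine ⟨z, (Finset.mem_sdiff.mp hzt).2, ?_⟩
      have := Finset.sdiff_union_of_subset hpt
      rw [hz] at this
      rw [← this]
      ext x; simp [Finset.mem_insert, or_comm]
    · rintro ⟨z, hz, rfl⟩
      have hc : (insert z p).card = 3 := by
        rw [Finset.card_insert_of_notMem hz, hp]
      exact ⟨⟨Finset.subset_univ _, hc⟩, Finset.subset_insert _ _⟩
  rw [himg, Finset.card_image_of_injOn, Finset.card_sdiff_of_subset (Finset.subset_univ p),
    Finset.card_univ, Fintype.card_fin, hp]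
  intro z hz z' hz' h
  have hzp : z ∉ p := by
    have := hz; simp only [Finset.coe_sdiff, Set.mem_diff, Finset.mem_coe] at this
    exact this.2
  have hzz : z ∈ insert z' p := by
    have h' : insert z p = insert z' p := h
    exact h' ▸ Finset.mem_insert_self z p
  rcases Finset.mem_insert.mp hzz with h' | h'
  · exact h'
  · exact absurd h' hzp

lemma dG_le (G : Finset (Finset (Fin n))) (p : Finset (Fin n)) (hp : p.card = 2) :
    dG G p ≤ n - 2 := by
  rw [← card_three_supsets p hp]
  apply Finset.card_le_card
  intro t ht
  simp only [dG, mem_filter] at ht ⊢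
  exact ⟨ht.1, ht.2.1⟩


/-- two distinct 3-element subsets of a 4-element set: union is everything, intersection has card 2 -/
lemma three_subsets_of_four {S t₁ t₂ : Finset (Fin n)} (hS : S.card = 4)
    (h1 : t₁ ⊆ S) (h1c : t₁.card = 3) (h2 : t₂ ⊆ S) (h2c : t₂.card = 3) (hne : t₁ ≠ t₂) :
    t₁ ∪ t₂ = S ∧ (t₁ ∩ t₂).card = 2 := by
  have hint : (t₁ ∩ t₂).card ≤ 2 := by
    by_contra h
    push_neg at h
    have hsub : t₁ ∩ t₂ ⊆ t₁ := Finset.inter_subset_left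
    have h3 : (t₁ ∩ t₂).card ≤ 3 := le_trans (Finset.card_le_card hsub) (le_of_eq h1c)
    have hcard : (t₁ ∩ t₂).card = 3 := by omega
    have he1 : t₁ ∩ t₂ = t₁ := Finset.eq_of_subset_of_card_le hsub (by omega)
    have he2 : t₁ ∩ t₂ = t₂ := Finset.eq_of_subset_of_card_le Finset.inter_subset_right (by omega)
    exact hne (he1 ▸ he2)
  have hu : (t₁ ∪ t₂).card + (t₁ ∩ t₂).card = 6 := by
    rw [Finset.card_union_add_card_inter, h1c, h2c]
  have husub : t₁ ∪ t₂ ⊆ S := Finset.union_subset h1 h2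
  have hle : (t₁ ∪ t₂).card ≤ 4 := hS ▸ Finset.card_le_card husub
  have hUeq : t₁ ∪ t₂ = S := Finset.eq_of_subset_of_card_le husub (by omega)
  exact ⟨hUeq, by omega⟩

/-- The main counting bound: 16 · #{4-sets with exactly 2 edges} ≤ C(n,2)(n-2)². -/
lemma counting_upper (G : Finset (Finset (Fin n))) :
    16 * (((Finset.univ : Finset (Fin n)).powersetCard 4).filter (fun S => w G S = 2)).card
      ≤ n.choose 2 * (n - 2) ^ 2 := by
  classical
  set quads := ((Finset.univ : Finset (Fin n)).powersetCard 4) with hquads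
  set T3 := ((Finset.univ : Finset (Fin n)).powersetCard 3) with hT3
  set B := ((T3 ×ˢ T3).filter (fun q => q.1 ∈ G ∧ q.2 ∉ G ∧ (q.1 ∩ q.2).card = 2)) with hB
  -- Step 1: 4 N₂ ≤ ∑_{S ∈ quads} w G S * (4 - w G S)
  have step1 : 4 * (quads.filter (fun S => w G S = 2)).card
      ≤ ∑ S ∈ quads, w G S * (4 - w G S) := by
    rw [Finset.card_filter, Finset.mul_sum]
    apply Finset.sum_le_sum
    intro S _
    by_cases h : w G S = 2
    · simp [h]
    · simp [h]
  -- Step 2: ∑_{S ∈ quads} w G S * (4 - w G S) = B.card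
  have step2 : ∑ S ∈ quads, w G S * (4 - w G S) = B.card := by
    have hmap : ∀ q ∈ B, q.1 ∪ q.2 ∈ quads := by
      rintro ⟨t₁, t₂⟩ hq
      simp only [hB, Finset.mem_filter, Finset.mem_product, hT3, Finset.mem_powersetCard] at hq
      obtain ⟨⟨⟨-, h1c⟩, -, h2c⟩, -, -, hint⟩ := hq
      have : (t₁ ∪ t₂).card + (t₁ ∩ t₂).card = 6 := by
        rw [Finset.card_union_add_card_inter, h1c, h2c]
      simp only [hquads, Finset.mem_powersetCard]
      exact ⟨Finset.subset_univ _, by omega⟩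
    rw [Finset.card_eq_sum_card_fiberwise hmap]
    apply Finset.sum_congr rfl
    intro S hS
    have hScard : S.card = 4 := by
      simp only [hquads, Finset.mem_powersetCard] at hS; exact hS.2
    have hfib : B.filter (fun q => q.1 ∪ q.2 = S)
        = ((S.powersetCard 3).filter (· ∈ G)) ×ˢ ((S.powersetCard 3).filter (· ∉ G)) := by
      ext ⟨t₁, t₂⟩
      simp only [hB, Finset.mem_filter, Finset.mem_product, hT3, Finset.mem_powersetCard]
      constructor
      · rintro ⟨⟨⟨⟨-, h1c⟩, -, h2c⟩, hg1, hg2, hint⟩, hU⟩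
        exact ⟨⟨⟨hU ▸ Finset.subset_union_left, h1c⟩, hg1⟩,
               ⟨hU ▸ Finset.subset_union_right, h2c⟩, hg2⟩
      · rintro ⟨⟨⟨h1s, h1c⟩, hg1⟩, ⟨h2s, h2c⟩, hg2⟩
        have hne : t₁ ≠ t₂ := fun h => hg2 (h ▸ hg1)
        obtain ⟨hU, hI⟩ := three_subsets_of_four hScard h1s h1c h2s h2c hne
        exact ⟨⟨⟨⟨Finset.subset_univ _, h1c⟩, Finset.subset_univ _, h2c⟩, hg1, hg2, hI⟩, hU⟩
    rw [hfib, Finset.card_product]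
    have hsplit : ((S.powersetCard 3).filter (· ∈ G)).card
        + ((S.powersetCard 3).filter (· ∉ G)).card = (S.powersetCard 3).card :=
      Finset.card_filter_add_card_filter_not _
    have hp3 : (S.powersetCard 3).card = 4 := by
      rw [Finset.card_powersetCard, hScard]; rfl
    have hw : w G S = ((S.powersetCard 3).filter (· ∈ G)).card := rfl
    have hnot : ((S.powersetCard 3).filter (· ∉ G)).card = 4 - w G S := by omega
    rw [← hnot, hw]
  -- Step 3: B.card = ∑_{p card 2} dG p * ((n-2) - dG p)
  have step3 : B.card = ∑ p ∈ (Finset.univ : Finset (Fin n)).powersetCard 2,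
      dG G p * ((n - 2) - dG G p) := by
    have hmap : ∀ q ∈ B, q.1 ∩ q.2 ∈ (Finset.univ : Finset (Fin n)).powersetCard 2 := by
      rintro ⟨t₁, t₂⟩ hq
      simp only [hB, Finset.mem_filter] at hq
      exact Finset.mem_powersetCard.mpr ⟨Finset.subset_univ _, hq.2.2.2⟩
    rw [Finset.card_eq_sum_card_fiberwise hmap]
    apply Finset.sum_congr rfl
    intro p hp
    have hpc : p.card = 2 := (Finset.mem_powersetCard.mp hp).2
    have hfib : B.filter (fun q => q.1 ∩ q.2 = p)
        = (T3.filter (fun t => p ⊆ t ∧ t ∈ G)) ×ˢ (T3.filter (fun t => p ⊆ t ∧ t ∉ G)) := by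
      ext ⟨t₁, t₂⟩
      simp only [hB, Finset.mem_filter, Finset.mem_product]
      constructor
      · rintro ⟨⟨⟨h1, h2⟩, hg1, hg2, hint⟩, hI⟩
        exact ⟨⟨h1, hI ▸ Finset.inter_subset_left, hg1⟩, ⟨h2, hI ▸ Finset.inter_subset_right, hg2⟩⟩
      · rintro ⟨⟨h1, hp1, hg1⟩, h2, hp2, hg2⟩
        have h1c : t₁.card = 3 := by
          simp only [hT3, Finset.mem_powersetCard] at h1; exact h1.2
        have h2c : t₂.card = 3 := by
          simp only [hT3, Finset.mem_powersetCard] at h2; exact h2.2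
        have hne : t₁ ≠ t₂ := fun h => hg2 (h ▸ hg1)
        have hpsub : p ⊆ t₁ ∩ t₂ := Finset.subset_inter hp1 hp2
        have hint2 : (t₁ ∩ t₂).card ≤ 2 := by
          by_contra hcon
          push_neg at hcon
          have hsub : t₁ ∩ t₂ ⊆ t₁ := Finset.inter_subset_left
          have h3 : (t₁ ∩ t₂).card ≤ 3 := le_trans (Finset.card_le_card hsub) (le_of_eq h1c)
          have he1 : t₁ ∩ t₂ = t₁ := Finset.eq_of_subset_of_card_le hsub (by omega)
          have he2 : t₁ ∩ t₂ = t₂ :=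
            Finset.eq_of_subset_of_card_le Finset.inter_subset_right (by omega)
          exact hne (he1 ▸ he2)
        have hIeq : t₁ ∩ t₂ = p :=
          (Finset.eq_of_subset_of_card_le hpsub (by omega)).symm
        exact ⟨⟨⟨h1, h2⟩, hg1, hg2, hIeq ▸ hpc⟩, hIeq⟩
    rw [hfib, Finset.card_product]
    have hdef : (T3.filter (fun t => p ⊆ t ∧ t ∈ G)).card = dG G p := rfl
    have hsplit : (T3.filter (fun t => p ⊆ t ∧ t ∈ G)).card
        + (T3.filter (fun t => p ⊆ t ∧ t ∉ G)).card = (T3.filter (fun t => p ⊆ t)).card := by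
      rw [← Finset.filter_filter, ← Finset.filter_filter]
      exact Finset.card_filter_add_card_filter_not _
    have htot : (T3.filter (fun t => p ⊆ t)).card = n - 2 := card_three_supsets p hpc
    have hBc : (T3.filter (fun t => p ⊆ t ∧ t ∉ G)).card = (n - 2) - dG G p := by omega
    rw [← hBc, hdef]
  -- Step 4 & 5: combine
  have step4 : ∀ p ∈ (Finset.univ : Finset (Fin n)).powersetCard 2,
      4 * (dG G p * ((n - 2) - dG G p)) ≤ (n - 2) ^ 2 := by
    intro p hp
    have hpc : p.card = 2 := (Finset.mem_powersetCard.mp hp).2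
    have hle := dG_le G p hpc
    set a := dG G p
    set m := n - 2
    have hb : a + (m - a) = m := by omega
    nlinarith [sq_nonneg ((a : ℤ) - (m - a)), hb]
  calc 16 * (quads.filter (fun S => w G S = 2)).card
      = 4 * (4 * (quads.filter (fun S => w G S = 2)).card) := by ring
    _ ≤ 4 * ∑ S ∈ quads, w G S * (4 - w G S) := by
        exact Nat.mul_le_mul_left 4 step1
    _ = ∑ p ∈ (Finset.univ : Finset (Fin n)).powersetCard 2,
          4 * (dG G p * ((n - 2) - dG G p)) := by
        rw [step2, step3, Finset.mul_sum]
    _ ≤ ∑ _p ∈ (Finset.univ : Finset (Fin n)).powersetCard 2, (n - 2) ^ 2 :=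
        Finset.sum_le_sum step4
    _ = n.choose 2 * (n - 2) ^ 2 := by
        rw [Finset.sum_const, smul_eq_mul, Finset.card_powersetCard,
          Finset.card_univ, Fintype.card_fin]


lemma inj4 {α : Type*} {a b c d : α} (hab : a ≠ b) (hac : a ≠ c) (had : a ≠ d)
    (hbc : b ≠ c) (hbd : b ≠ d) (hcd : c ≠ d) :
    Function.Injective (fun i : Fin 4 =>
      if i = 0 then a else if i = 1 then b else if i = 2 then c else d) := by
  intro i j hij
  fin_cases i <;> fin_cases j <;> simp_all

lemma inducesCopy_iff (G : Finset (Finset (Fin n))) (hG : IsThreeGraph G) (S : Finset (Fin n)) :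
    InducesCopy FourTwo G S ↔ S.card = 4 ∧ w G S = 2 := by
  constructor
  · rintro ⟨f, hfS, hf⟩
    have hScard : S.card = 4 := by
      rw [← hfS, Finset.card_map, Finset.card_univ, Fintype.card_fin]
    refine ⟨hScard, ?_⟩
    have himg : (S.powersetCard 3).filter (· ∈ G)
        = (((Finset.univ : Finset (Fin 4)).powersetCard 3).filter (· ∈ FourTwo)).image
            (Finset.map f) := by
      ext t
      simp only [Finset.mem_filter, Finset.mem_powersetCard, Finset.mem_image]
      constructor
      · rintro ⟨⟨hts, htc⟩, htG⟩
        rw [← hfS] at hts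
        obtain ⟨e, -, rfl⟩ := Finset.subset_map_iff.mp hts
        have hec : e.card = 3 := by rwa [Finset.card_map] at htc
        exact ⟨e, ⟨⟨Finset.subset_univ _, hec⟩, (hf e hec).mpr htG⟩, rfl⟩
      · rintro ⟨e, ⟨⟨-, hec⟩, heH⟩, rfl⟩
        refine ⟨⟨?_, by rw [Finset.card_map]; exact hec⟩, (hf e hec).mp heH⟩
        rw [← hfS]
        exact Finset.map_subset_map.mpr (Finset.subset_univ _)
    rw [w, himg, Finset.card_image_of_injective _ (Finset.map_injective f)]
    decide
  · rintro ⟨hScard, hw⟩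
    obtain ⟨e₁, e₂, hne, hpair⟩ := Finset.card_eq_two.mp hw
    have he₁ : e₁ ∈ (S.powersetCard 3).filter (· ∈ G) := by
      rw [hpair]; exact Finset.mem_insert_self _ _
    have he₂ : e₂ ∈ (S.powersetCard 3).filter (· ∈ G) := by
      rw [hpair]; exact Finset.mem_insert_of_mem (Finset.mem_singleton_self _)
    simp only [Finset.mem_filter, Finset.mem_powersetCard] at he₁ he₂
    obtain ⟨⟨h1s, h1c⟩, h1G⟩ := he₁
    obtain ⟨⟨h2s, h2c⟩, h2G⟩ := he₂
    -- intersection has card 2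
    have hint2 : (e₁ ∩ e₂).card = 2 := by
      have hle : (e₁ ∩ e₂).card ≤ 2 := by
        by_contra hcon
        push_neg at hcon
        have hsub : e₁ ∩ e₂ ⊆ e₁ := Finset.inter_subset_left
        have h3 : (e₁ ∩ e₂).card ≤ 3 := le_trans (Finset.card_le_card hsub) (le_of_eq h1c)
        have heq1 : e₁ ∩ e₂ = e₁ := Finset.eq_of_subset_of_card_le hsub (by omega)
        have heq2 : e₁ ∩ e₂ = e₂ :=
          Finset.eq_of_subset_of_card_le Finset.inter_subset_right (by omega)
        exact hne (heq1 ▸ heq2)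
      have hu : (e₁ ∪ e₂).card + (e₁ ∩ e₂).card = 6 := by
        rw [Finset.card_union_add_card_inter, h1c, h2c]
      have husub : e₁ ∪ e₂ ⊆ S := Finset.union_subset h1s h2s
      have hUle : (e₁ ∪ e₂).card ≤ 4 := hScard ▸ Finset.card_le_card husub
      omega
    obtain ⟨a, b, hab, hp⟩ := Finset.card_eq_two.mp hint2
    -- c and d
    have hc1 : (e₁ \ (e₁ ∩ e₂)).card = 1 := by
      rw [Finset.card_sdiff_of_subset Finset.inter_subset_left, h1c, hint2]
    have hd1 : (e₂ \ (e₁ ∩ e₂)).card = 1 := by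
      rw [Finset.card_sdiff_of_subset Finset.inter_subset_right, h2c, hint2]
    obtain ⟨c, hc⟩ := Finset.card_eq_one.mp hc1
    obtain ⟨d, hd⟩ := Finset.card_eq_one.mp hd1
    have hcmem : c ∈ e₁ \ (e₁ ∩ e₂) := hc ▸ Finset.mem_singleton_self c
    have hdmem : d ∈ e₂ \ (e₁ ∩ e₂) := hd ▸ Finset.mem_singleton_self d
    rw [Finset.mem_sdiff] at hcmem hdmem
    have hcd : c ≠ d := by
      intro h
      subst h
      exact hcmem.2 (Finset.mem_inter.mpr ⟨hcmem.1, hdmem.1⟩)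
    have hca : c ≠ a := by intro h; subst h; exact hcmem.2 (hp ▸ Finset.mem_insert_self _ _)
    have hcb : c ≠ b := by
      intro h; subst h
      exact hcmem.2 (hp ▸ Finset.mem_insert_of_mem (Finset.mem_singleton_self _))
    have hda : d ≠ a := by intro h; subst h; exact hdmem.2 (hp ▸ Finset.mem_insert_self _ _)
    have hdb : d ≠ b := by
      intro h; subst h
      exact hdmem.2 (hp ▸ Finset.mem_insert_of_mem (Finset.mem_singleton_self _))
    -- e₁ = {a,b,c}, e₂ = {a,b,d}
    have he₁eq : e₁ = {a, b, c} := by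
      have := Finset.sdiff_union_of_subset (Finset.inter_subset_left (s₁ := e₁) (s₂ := e₂))
      rw [hc, hp] at this
      rw [← this]
      ext x
      simp only [Finset.mem_union, Finset.mem_singleton, Finset.mem_insert]
      tauto
    have he₂eq : e₂ = {a, b, d} := by
      have := Finset.sdiff_union_of_subset (Finset.inter_subset_right (s₁ := e₁) (s₂ := e₂))
      rw [hd, hp] at this
      rw [← this]
      ext x
      simp only [Finset.mem_union, Finset.mem_singleton, Finset.mem_insert]
      tauto
    have haS : a ∈ S := h1s (he₁eq ▸ Finset.mem_insert_self _ _)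
    have hbS : b ∈ S := h1s (he₁eq ▸ (by simp : b ∈ ({a,b,c} : Finset (Fin n))))
    have hcS : c ∈ S := h1s (he₁eq ▸ (by simp : c ∈ ({a,b,c} : Finset (Fin n))))
    have hdS : d ∈ S := h2s (he₂eq ▸ (by simp : d ∈ ({a,b,d} : Finset (Fin n))))
    -- S = {a, b, c, d}
    have habcd : ({a, b, c, d} : Finset (Fin n)).card = 4 := by
      rw [Finset.card_insert_of_notMem (by simp [hab, hca.symm, hda.symm]),
        Finset.card_insert_of_notMem (by simp [hcb.symm, hdb.symm]),
        Finset.card_insert_of_notMem (by simp [hcd]), Finset.card_singleton]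
    have hSeq : S = {a, b, c, d} := by
      refine (Finset.eq_of_subset_of_card_le ?_ (by omega)).symm
      intro x hx
      simp only [Finset.mem_insert, Finset.mem_singleton] at hx
      rcases hx with rfl | rfl | rfl | rfl
      exacts [haS, hbS, hcS, hdS]
    -- the embedding
    have hinj : Function.Injective (fun i : Fin 4 =>
        if i = 0 then a else if i = 1 then b else if i = 2 then c else d) :=
      inj4 hab hca.symm hda.symm hcb.symm hdb.symm hcd
    set f : Fin 4 ↪ Fin n := ⟨_, hinj⟩ with hfdef
    have hf0 : f 0 = a := rfl
    have hf1 : f 1 = b := rfl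
    have hf2 : f 2 = c := rfl
    have hf3 : f 3 = d := rfl
    refine ⟨f, ?_, ?_⟩
    · have huniv : (Finset.univ : Finset (Fin 4)) = {0, 1, 2, 3} := by decide
      rw [huniv, hSeq]
      simp [Finset.map_insert, Finset.map_singleton, hf0, hf1, hf2, hf3]
    · intro e hec
      have henum : e = {0,1,2} ∨ e = {0,1,3} ∨ e = {0,2,3} ∨ e = {1,2,3} := by
        revert hec; revert e; decide
      have hGnot : ∀ t : Finset (Fin n), t ⊆ S → t.card = 3 → t ∈ G → t = e₁ ∨ t = e₂ := by
        intro t hts htc htG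
        have : t ∈ (S.powersetCard 3).filter (· ∈ G) := by
          simp only [Finset.mem_filter, Finset.mem_powersetCard]
          exact ⟨⟨hts, htc⟩, htG⟩
        rw [hpair] at this
        simpa using this
      rcases henum with rfl | rfl | rfl | rfl
      · have hmap : Finset.map f {0,1,2} = {a, b, c} := by
          simp [Finset.map_insert, Finset.map_singleton, hf0, hf1, hf2]
        rw [hmap, ← he₁eq]
        simp [FourTwo, h1G]
      · have hmap : Finset.map f {0,1,3} = {a, b, d} := by
          simp [Finset.map_insert, Finset.map_singleton, hf0, hf1, hf3]
        rw [hmap, ← he₂eq]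
        simp [FourTwo, h2G]
      · have hmap : Finset.map f {0,2,3} = {a, c, d} := by
          simp [Finset.map_insert, Finset.map_singleton, hf0, hf2, hf3]
        rw [hmap]
        have hnotin : ({a, c, d} : Finset (Fin n)) ∉ G := by
          intro hin
          have hsub : ({a, c, d} : Finset (Fin n)) ⊆ S := by
            intro x hx
            simp only [Finset.mem_insert, Finset.mem_singleton] at hx
            rcases hx with rfl | rfl | rfl
            exacts [haS, hcS, hdS]
          have hcard : ({a, c, d} : Finset (Fin n)).card = 3 := by
            rw [Finset.card_insert_of_notMem (by simp [hca.symm, hda.symm]),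
              Finset.card_insert_of_notMem (by simp [hcd]), Finset.card_singleton]
          rcases hGnot _ hsub hcard hin with h | h
          · rw [he₁eq] at h
            have : b ∈ ({a, c, d} : Finset (Fin n)) := h ▸ (by simp : b ∈ ({a,b,c} : Finset (Fin n)))
            simp only [Finset.mem_insert, Finset.mem_singleton] at this
            tauto
          · rw [he₂eq] at h
            have : b ∈ ({a, c, d} : Finset (Fin n)) := h ▸ (by simp : b ∈ ({a,b,d} : Finset (Fin n)))
            simp only [Finset.mem_insert, Finset.mem_singleton] at this
            tauto
        exact iff_of_false (by decide) hnotin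
      · have hmap : Finset.map f {1,2,3} = {b, c, d} := by
          simp [Finset.map_insert, Finset.map_singleton, hf1, hf2, hf3]
        rw [hmap]
        have hnotin : ({b, c, d} : Finset (Fin n)) ∉ G := by
          intro hin
          have hsub : ({b, c, d} : Finset (Fin n)) ⊆ S := by
            intro x hx
            simp only [Finset.mem_insert, Finset.mem_singleton] at hx
            rcases hx with rfl | rfl | rfl
            exacts [hbS, hcS, hdS]
          have hcard : ({b, c, d} : Finset (Fin n)).card = 3 := by
            rw [Finset.card_insert_of_notMem (by simp [hcb.symm, hdb.symm]),
              Finset.card_insert_of_notMem (by simp [hcd]), Finset.card_singleton]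
          rcases hGnot _ hsub hcard hin with h | h
          · rw [he₁eq] at h
            have : a ∈ ({b, c, d} : Finset (Fin n)) := h ▸ (by simp : a ∈ ({a,b,c} : Finset (Fin n)))
            simp only [Finset.mem_insert, Finset.mem_singleton] at this
            tauto
          · rw [he₂eq] at h
            have : a ∈ ({b, c, d} : Finset (Fin n)) := h ▸ (by simp : a ∈ ({a,b,d} : Finset (Fin n)))
            simp only [Finset.mem_insert, Finset.mem_singleton] at this
            tauto
        exact iff_of_false (by decide) hnotin


/-- the 3-graph of triples spanning an odd number of edges of the graph `h` -/
def Gh (h : Finset (Finset (Fin n))) : Finset (Finset (Fin n)) :=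
  ((Finset.univ : Finset (Fin n)).powersetCard 3).filter
    (fun t => Odd ((h.filter (· ⊆ t)).card))

lemma isThreeGraph_Gh (h : Finset (Finset (Fin n))) : IsThreeGraph (Gh h) := by
  intro e he
  simp only [Gh, Finset.mem_filter, Finset.mem_powersetCard] at he
  exact he.1.2

set_option maxHeartbeats 2000000 in
lemma model48 :
    ((((Finset.univ : Finset (Fin 4)).powersetCard 2).powerset).filter
      (fun r => w (Gh r) (Finset.univ : Finset (Fin 4)) = 2)).card = 48 := by decide

/-- goodness of `S` in `Gh h` only depends on the pairs of `h` inside `S` -/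
lemma w_localize (h : Finset (Finset (Fin n))) (hh : ∀ x ∈ h, x.card = 2)
    (S : Finset (Fin n)) :
    w (Gh (h ∩ S.powersetCard 2)) S = w (Gh h) S := by
  unfold w
  congr 1
  apply Finset.filter_congr
  intro t ht
  have hts : t ⊆ S := (Finset.mem_powersetCard.mp ht).1
  simp only [Gh, Finset.mem_filter]
  have heq : (h ∩ S.powersetCard 2).filter (· ⊆ t) = h.filter (· ⊆ t) := by
    ext x
    simp only [Finset.mem_filter, Finset.mem_inter, Finset.mem_powersetCard]
    constructor
    · tauto
    · rintro ⟨hx, hxt⟩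
      exact ⟨⟨hx, hxt.trans hts, hh x hx⟩, hxt⟩
  rw [heq]

/-- splitting a powerset filter over a sub-finset -/
lemma powerset_filter_inter {α : Type*} [DecidableEq α] (P Q : Finset α) (hQP : Q ⊆ P)
    (φ : Finset α → Prop) [DecidablePred φ] :
    (P.powerset.filter (fun h => φ (h ∩ Q))).card
      = (Q.powerset.filter φ).card * 2 ^ (P.card - Q.card) := by
  have hcard : (P.powerset.filter (fun h => φ (h ∩ Q))).card
      = ((Q.powerset.filter φ) ×ˢ (P \ Q).powerset).card := by
    apply Finset.card_bij' (i := fun h _ => (h ∩ Q, h \ Q)) (j := fun q _ => q.1 ∪ q.2)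
    · rintro h hm
      simp only [Finset.mem_filter, Finset.mem_powerset] at hm
      simp only [Finset.mem_product, Finset.mem_filter, Finset.mem_powerset]
      exact ⟨⟨Finset.inter_subset_right, hm.2⟩, Finset.sdiff_subset_sdiff hm.1 le_rfl⟩
    · rintro ⟨r, s⟩ hm
      simp only [Finset.mem_product, Finset.mem_filter, Finset.mem_powerset] at hm
      obtain ⟨⟨hrQ, hφ⟩, hs⟩ := hm
      simp only [Finset.mem_filter, Finset.mem_powerset]
      have hsQ : Disjoint s Q := by
        apply Finset.disjoint_left.mpr
        intro x hxs hxQ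
        exact (Finset.mem_sdiff.mp (hs hxs)).2 hxQ
      constructor
      · exact Finset.union_subset (hrQ.trans hQP) (hs.trans (Finset.sdiff_subset))
      · have : (r ∪ s) ∩ Q = r := by
          rw [Finset.union_inter_distrib_right, Finset.inter_eq_left.mpr hrQ,
            Finset.disjoint_iff_inter_eq_empty.mp hsQ, Finset.union_empty]
        rw [this]
        exact hφ
    · intro h hm
      ext x
      simp only [Finset.mem_union, Finset.mem_inter, Finset.mem_sdiff]
      tauto
    · rintro ⟨r, s⟩ hm
      simp only [Finset.mem_product, Finset.mem_filter, Finset.mem_powerset] at hm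
      obtain ⟨⟨hrQ, -⟩, hs⟩ := hm
      have hsQ : ∀ x ∈ s, x ∉ Q := fun x hxs => (Finset.mem_sdiff.mp (hs hxs)).2
      have h1 : (r ∪ s) ∩ Q = r := by
        ext x
        simp only [Finset.mem_inter, Finset.mem_union]
        constructor
        · rintro ⟨hx | hx, hxQ⟩
          · exact hx
          · exact absurd hxQ (hsQ x hx)
        · intro hx
          exact ⟨Or.inl hx, hrQ hx⟩
      have h2 : (r ∪ s) \ Q = s := by
        ext x
        simp only [Finset.mem_sdiff, Finset.mem_union]
        constructor
        · rintro ⟨hx | hx, hxQ⟩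
          · exact absurd (hrQ hx) hxQ
          · exact hx
        · intro hx
          exact ⟨Or.inr hx, hsQ x hx⟩
      simp only [h1, h2]
  rw [hcard, Finset.card_product, Finset.card_powerset, Finset.card_sdiff_of_subset hQP]

/-- transport of the model count to an arbitrary 4-set -/
lemma count_good_subgraphs (S : Finset (Fin n)) (hS : S.card = 4) :
    (((S.powersetCard 2).powerset).filter (fun r => w (Gh r) S = 2)).card = 48 := by
  classical
  -- embedding of Fin 4 onto S
  have hσ := S.orderIsoOfFin hS
  set f : Fin 4 ↪ Fin n :=
    ⟨fun i => (S.orderIsoOfFin hS i : Fin n), by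
      intro i j hij
      exact (S.orderIsoOfFin hS).injective (Subtype.ext hij)⟩ with hfdef
  have hfS : (Finset.univ : Finset (Fin 4)).map f = S := by
    ext x
    simp only [Finset.mem_map, Finset.mem_univ, true_and]
    constructor
    · rintro ⟨i, rfl⟩
      exact (S.orderIsoOfFin hS i).2
    · intro hx
      obtain ⟨i, hi⟩ := (S.orderIsoOfFin hS).surjective ⟨x, hx⟩
      exact ⟨i, congrArg Subtype.val hi⟩
  set F : Finset (Fin 4) ↪ Finset (Fin n) := (Finset.mapEmbedding f).toEmbedding with hFdef
  have hFapp : ∀ e : Finset (Fin 4), F e = e.map f := fun e => rfl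
  -- transport of w
  have hw : ∀ r' : Finset (Finset (Fin 4)),
      w (Gh (r'.map F)) S = w (Gh r') (Finset.univ : Finset (Fin 4)) := by
    intro r'
    unfold w
    have hpows : S.powersetCard 3
        = ((Finset.univ : Finset (Fin 4)).powersetCard 3).map F := by
      rw [← hfS, Finset.powersetCard_map]
    rw [hpows, Finset.filter_map, Finset.card_map]
    congr 1
    apply Finset.filter_congr
    intro t ht
    have htc : t.card = 3 := (Finset.mem_powersetCard.mp ht).2
    simp only [Function.comp_apply, Gh, Finset.mem_filter, Finset.mem_powersetCard,
      Finset.subset_univ, true_and]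
    have hcount : ((r'.map F).filter (· ⊆ t.map f)).card = (r'.filter (· ⊆ t)).card := by
      rw [Finset.filter_map, Finset.card_map]
      congr 1
      apply Finset.filter_congr
      intro x _
      simp only [Function.comp_apply, hFapp]
      exact ⟨fun hsub => Finset.map_subset_map.mp hsub, fun hsub => Finset.map_subset_map.mpr hsub⟩
    rw [hFapp t, hcount, Finset.card_map]
  -- bijection between the two filtered collections
  rw [← model48]
  symm
  apply Finset.card_bij (i := fun r' _ => r'.map F)
  · intro r' hm
    simp only [Finset.mem_filter, Finset.mem_powerset] at hm ⊢
    constructor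
    · intro x hx
      obtain ⟨e, he, rfl⟩ := Finset.mem_map.mp hx
      have he2 := hm.1 he
      simp only [Finset.mem_powersetCard] at he2 ⊢
      refine ⟨?_, by rw [hFapp, Finset.card_map]; exact he2.2⟩
      rw [hFapp, ← hfS]
      exact Finset.map_subset_map.mpr he2.1
    · rw [hw r']
      exact hm.2
  · intro r₁ h₁ r₂ h₂ heq
    exact Finset.map_injective F heq
  · intro r hm
    simp only [Finset.mem_filter, Finset.mem_powerset] at hm
    have hrsub : r ⊆ ((Finset.univ : Finset (Fin 4)).powersetCard 2).map F := by
      rw [← Finset.powersetCard_map, hfS]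
      exact hm.1
    obtain ⟨u, hu, rfl⟩ := Finset.subset_map_iff.mp hrsub
    refine ⟨u, ?_, rfl⟩
    simp only [Finset.mem_filter, Finset.mem_powerset]
    exact ⟨hu, by rw [← hw u]; exact hm.2⟩


lemma count_graphs_good (S : Finset (Fin n)) (hS4 : S.card = 4) :
    (((((Finset.univ : Finset (Fin n)).powersetCard 2)).powerset).filter
      (fun h => w (Gh h) S = 2)).card = 48 * 2 ^ (n.choose 2 - 6) := by
  classical
  set P := ((Finset.univ : Finset (Fin n)).powersetCard 2) with hPdef
  set Q := S.powersetCard 2 with hQdef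
  have hQP : Q ⊆ P := by
    intro x hx
    rw [hQdef, Finset.mem_powersetCard] at hx
    rw [hPdef, Finset.mem_powersetCard]
    exact ⟨Finset.subset_univ _, hx.2⟩
  have hQcard : Q.card = 6 := by
    rw [hQdef, Finset.card_powersetCard, hS4]
    rfl
  have hPcard : P.card = n.choose 2 := by
    rw [hPdef, Finset.card_powersetCard, Finset.card_univ, Fintype.card_fin]
  have hcong : P.powerset.filter (fun h => w (Gh h) S = 2)
      = P.powerset.filter (fun h => w (Gh (h ∩ Q)) S = 2) := by
    apply Finset.filter_congr
    intro h hm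
    rw [Finset.mem_powerset] at hm
    have hh : ∀ x ∈ h, x.card = 2 := by
      intro x hx
      have := hm hx
      rw [hPdef, Finset.mem_powersetCard] at this
      exact this.2
    rw [w_localize h hh S]
  rw [hcong, powerset_filter_inter P Q hQP (fun r => w (Gh r) S = 2),
    count_good_subgraphs S hS4, hQcard, hPcard]

lemma exists_good_graph (hn : 4 ≤ n) :
    ∃ h, 3 * n.choose 4 ≤ 4 * ((((Finset.univ : Finset (Fin n)).powersetCard 4)).filter
        (fun S => w (Gh h) S = 2)).card := by
  classical
  set P := ((Finset.univ : Finset (Fin n)).powersetCard 2) with hPdef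
  set quads := ((Finset.univ : Finset (Fin n)).powersetCard 4) with hquadsdef
  have hM6 : 6 ≤ n.choose 2 := by
    have := Nat.choose_le_choose 2 hn
    exact le_trans (by decide) this
  have hPcard : P.card = n.choose 2 := by
    rw [hPdef, Finset.card_powersetCard, Finset.card_univ, Fintype.card_fin]
  have hquadscard : quads.card = n.choose 4 := by
    rw [hquadsdef, Finset.card_powersetCard, Finset.card_univ, Fintype.card_fin]
  have hswap : ∑ h ∈ P.powerset, (quads.filter (fun S => w (Gh h) S = 2)).card
      = ∑ S ∈ quads, (P.powerset.filter (fun h => w (Gh h) S = 2)).card := by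
    simp_rw [Finset.card_filter]
    rw [Finset.sum_comm]
  have htot : ∑ h ∈ P.powerset, (quads.filter (fun S => w (Gh h) S = 2)).card
      = n.choose 4 * (48 * 2 ^ (n.choose 2 - 6)) := by
    rw [hswap]
    rw [Finset.sum_congr rfl (fun S hS => count_graphs_good S
      (Finset.mem_powersetCard.mp hS).2)]
    rw [Finset.sum_const, smul_eq_mul, hquadscard]
  have hpow : 2 ^ (n.choose 2) = 2 ^ (n.choose 2 - 6) * 64 := by
    have : n.choose 2 = (n.choose 2 - 6) + 6 := by omega
    rw [this, pow_add]
    norm_num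
  have hsum_le : ∑ _h ∈ P.powerset, 3 * n.choose 4
      ≤ ∑ h ∈ P.powerset, 4 * (quads.filter (fun S => w (Gh h) S = 2)).card := by
    have hL : ∑ _h ∈ P.powerset, 3 * n.choose 4 = 2 ^ (n.choose 2) * (3 * n.choose 4) := by
      rw [Finset.sum_const, smul_eq_mul, Finset.card_powerset, hPcard]
    have hR : ∑ h ∈ P.powerset, 4 * (quads.filter (fun S => w (Gh h) S = 2)).card
        = 4 * (n.choose 4 * (48 * 2 ^ (n.choose 2 - 6))) := by
      rw [← Finset.mul_sum, htot]
    rw [hL, hR, hpow]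
    exact le_of_eq (by ring)
  obtain ⟨h, -, hh⟩ := Finset.exists_le_of_sum_le ⟨∅, by simp⟩ hsum_le
  exact ⟨h, hh⟩


lemma eH_eq {n : ℕ} (G : Finset (Finset (Fin n))) (hG : IsThreeGraph G) :
    eH FourTwo G = (((Finset.univ : Finset (Fin n)).powersetCard 4).filter
      (fun S => w G S = 2)).card := by
  unfold eH
  have hset : {S : Finset (Fin n) | InducesCopy FourTwo G S}
      = ↑(((Finset.univ : Finset (Fin n)).powersetCard 4).filter (fun S => w G S = 2)) := by
    ext S
    simp only [Set.mem_setOf_eq, Finset.coe_filter, Set.mem_setOf_eq, Finset.mem_powersetCard]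
    rw [inducesCopy_iff G hG S]
    constructor
    · rintro ⟨h4, hw⟩
      exact ⟨⟨Finset.subset_univ _, h4⟩, hw⟩
    · rintro ⟨⟨-, h4⟩, hw⟩
      exact ⟨h4, hw⟩
  rw [hset, Set.ncard_coe_finset]

lemma familyFree_empty {n : ℕ} (G : Finset (Finset (Fin n))) :
    FamilyFree (∅ : Set ((m : ℕ) × Finset (Finset (Fin m)))) G :=
  fun F hF => absurd hF (Set.notMem_empty F)

lemma exH_facts (n : ℕ) (hn : 4 ≤ n) :
    3 * n.choose 4 ≤ 4 * exH FourTwo (∅ : Set ((m : ℕ) × Finset (Finset (Fin m)))) n ∧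
    16 * exH FourTwo (∅ : Set ((m : ℕ) × Finset (Finset (Fin m)))) n
      ≤ n.choose 2 * (n - 2) ^ 2 := by
  classical
  set SS := {k : ℕ | ∃ G : Finset (Finset (Fin n)), IsThreeGraph G ∧
    FamilyFree (∅ : Set ((m : ℕ) × Finset (Finset (Fin m)))) G ∧ eH FourTwo G = k} with hSS
  have hexH : exH FourTwo (∅ : Set ((m : ℕ) × Finset (Finset (Fin m)))) n = sSup SS := rfl
  have hub : ∀ k ∈ SS, 16 * k ≤ n.choose 2 * (n - 2) ^ 2 := by
    rintro k ⟨G, hG, -, rfl⟩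
    rw [eH_eq G hG]
    exact counting_upper G
  have hbdd : BddAbove SS := by
    refine ⟨n.choose 2 * (n - 2) ^ 2, fun k hk => ?_⟩
    have h1 := hub k hk
    omega
  have hne : SS.Nonempty := ⟨eH FourTwo (∅ : Finset (Finset (Fin n))),
    ∅, fun e he => absurd he (Finset.notMem_empty e), familyFree_empty _, rfl⟩
  constructor
  · obtain ⟨h, hh⟩ := exists_good_graph (n := n) hn
    have hmem : eH FourTwo (Gh h) ∈ SS :=
      ⟨Gh h, isThreeGraph_Gh h, familyFree_empty _, rfl⟩
    have hle : eH FourTwo (Gh h) ≤ sSup SS := le_csSup hbdd hmem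
    have h2 : 3 * n.choose 4 ≤ 4 * eH FourTwo (Gh h) := by
      rw [eH_eq _ (isThreeGraph_Gh h)]
      exact hh
    rw [hexH]
    omega
  · have hmem := Nat.sSup_mem hne hbdd
    rw [hexH]
    exact hub _ hmem

lemma choose_identity (n : ℕ) :
    n.choose 2 * (n - 2) ^ 2 * (n - 3) = 12 * (n - 2) * n.choose 4 := by
  have e2 : n.choose 2 * 2 = (n - 1) * n := by
    have h := Nat.descFactorial_eq_factorial_mul_choose n 2
    have hd : n.descFactorial 2 = (n - 1) * (n * 1) := by
      simp [Nat.descFactorial]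
    rw [hd] at h
    norm_num [Nat.factorial] at h
    omega
  have e4 : n.choose 4 * 24 = (n - 3) * ((n - 2) * ((n - 1) * n)) := by
    have h := Nat.descFactorial_eq_factorial_mul_choose n 4
    have hd : n.descFactorial 4 = (n - 3) * ((n - 2) * ((n - 1) * (n * 1))) := by
      simp [Nat.descFactorial]
    rw [hd] at h
    norm_num [Nat.factorial] at h
    omega
  have key : (n.choose 2 * (n - 2) ^ 2 * (n - 3)) * 48 = (12 * (n - 2) * n.choose 4) * 48 := by
    calc (n.choose 2 * (n - 2) ^ 2 * (n - 3)) * 48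
        = (n.choose 2 * 2) * ((n - 2) ^ 2 * (n - 3) * 24) := by ring
      _ = ((n - 1) * n) * ((n - 2) ^ 2 * (n - 3) * 24) := by rw [e2]
      _ = (n.choose 4 * 24) * ((n - 2) * 2 * 12) := by rw [e4]; ring
      _ = (12 * (n - 2) * n.choose 4) * 48 := by ring
  exact Nat.eq_of_mul_eq_mul_right (by norm_num) key

end IndAux

theorem inducibility_FourTwo :
    Filter.Tendsto
      (fun n => (exH FourTwo (∅ : Set ((m : ℕ) × Finset (Finset (Fin m)))) n : ℝ) / (n.choose 4))
      Filter.atTop (nhds (3/4)) := by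
  have hupperfun : Filter.Tendsto
      (fun n : ℕ => 3 * ((n : ℝ) - 2) / (4 * ((n : ℝ) - 3)))
      Filter.atTop (nhds (3/4)) := by
    have h1 : Filter.Tendsto (fun n : ℕ => ((n : ℝ) - 3)) Filter.atTop Filter.atTop :=
      Filter.tendsto_atTop_add_const_right _ (-3) tendsto_natCast_atTop_atTop
    have h2 : Filter.Tendsto (fun n : ℕ => ((n : ℝ) - 3)⁻¹) Filter.atTop (nhds 0) :=
      h1.inv_tendsto_atTop
    have h3 : Filter.Tendsto (fun n : ℕ => 3/4 * (1 + ((n : ℝ) - 3)⁻¹))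
        Filter.atTop (nhds (3/4 * (1 + 0))) :=
      (tendsto_const_nhds.add h2).const_mul _
    have h4 : (3/4 : ℝ) * (1 + 0) = 3/4 := by norm_num
    rw [h4] at h3
    apply h3.congr'
    filter_upwards [Filter.eventually_ge_atTop 4] with n hn
    have hne : ((n : ℝ) - 3) ≠ 0 := by
      have : (4 : ℝ) ≤ (n : ℝ) := by exact_mod_cast hn
      linarith
    field_simp
    ring
  apply tendsto_of_tendsto_of_tendsto_of_le_of_le' tendsto_const_nhds hupperfun
  · -- lower bound
    filter_upwards [Filter.eventually_ge_atTop 4] with n hn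
    have hfacts := IndAux.exH_facts n hn
    have hCpos : (0 : ℝ) < (n.choose 4 : ℝ) := by
      exact_mod_cast Nat.choose_pos (by omega : 4 ≤ n)
    rw [div_le_div_iff₀ (by norm_num) hCpos]
    have := hfacts.1
    have hcast : (3 : ℝ) * (n.choose 4 : ℝ) ≤ 4 * (exH FourTwo
        (∅ : Set ((m : ℕ) × Finset (Finset (Fin m)))) n : ℝ) := by
      exact_mod_cast this
    linarith
  · -- upper bound
    filter_upwards [Filter.eventually_ge_atTop 4] with n hn
    have hfacts := IndAux.exH_facts n hn
    have hCpos : (0 : ℝ) < (n.choose 4 : ℝ) := by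
      exact_mod_cast Nat.choose_pos (by omega : 4 ≤ n)
    have hden : (0 : ℝ) < 4 * ((n : ℝ) - 3) := by
      have : (4 : ℝ) ≤ (n : ℝ) := by exact_mod_cast hn
      linarith
    rw [div_le_div_iff₀ hCpos hden]
    -- from ℕ: 16 * exH * (n-3) ≤ 12 * (n-2) * choose 4
    have hNat : 16 * exH FourTwo (∅ : Set ((m : ℕ) × Finset (Finset (Fin m)))) n * (n - 3)
        ≤ 12 * (n - 2) * n.choose 4 := by
      calc 16 * exH FourTwo (∅ : Set ((m : ℕ) × Finset (Finset (Fin m)))) n * (n - 3)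
          ≤ (n.choose 2 * (n - 2) ^ 2) * (n - 3) :=
            Nat.mul_le_mul_right _ hfacts.2
        _ = 12 * (n - 2) * n.choose 4 := IndAux.choose_identity n
    have hc2 : ((n - 2 : ℕ) : ℝ) = (n : ℝ) - 2 := by
      have h2n : (2 : ℕ) ≤ n := by omega
      have := Nat.cast_sub (R := ℝ) h2n
      simpa using this
    have hc3 : ((n - 3 : ℕ) : ℝ) = (n : ℝ) - 3 := by
      have h3n : (3 : ℕ) ≤ n := by omega
      have := Nat.cast_sub (R := ℝ) h3n
      simpa using this
    have hcast : 16 * (exH FourTwo (∅ : Set ((m : ℕ) × Finset (Finset (Fin m)))) n : ℝ)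
        * ((n : ℝ) - 3) ≤ 12 * ((n : ℝ) - 2) * (n.choose 4 : ℝ) := by
      rw [← hc2, ← hc3]
      exact_mod_cast hNat
    linarith
end

section
/- Let D be any directed graph and define the 3-graph G(D) on the same vertex set by making {x,y,z} an edge if and only if the sub-digraph of D induced on {x,y,z} is isomorphic to the out-star S⃗3 (one vertex with arcs to the other two, and no other arcs). Then G(D) contains no subgraph isomorphic to K4 (the complete 3-graph on 4 vertices) and no subgraph isomorphic to C5 (the 3-graph on {1,2,3,4,5} with edges {1,2,3}, {2,3,4}, {3,4,5}, {4,5,1}, {5,1,2}). -/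
/-- The set `S` of vertices induces a copy of the out-star `S⃗₃` in the directed graph
with arc set `E`: some vertex of `S` sends arcs to the other two, and there are no other
arcs among the three vertices. -/
def CopyS3 {V : Type*} (E : Set (V × V)) (S : Set V) : Prop :=
  ∃ f : Fin 3 → V, Function.Injective f ∧ Set.range f = S ∧
    ∀ i j : Fin 3, i ≠ j → ((f i, f j) ∈ E ↔ i = 0)

lemma copyS3_cases {V : Type*} (E : Set (V × V)) {a b c : V}
    (hab : a ≠ b) (hac : a ≠ c) (hbc : b ≠ c)
    (h : CopyS3 E ({a, b, c} : Set V)) :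
    ((a,b) ∈ E ∧ (a,c) ∈ E ∧ (b,a) ∉ E ∧ (c,a) ∉ E ∧ (b,c) ∉ E ∧ (c,b) ∉ E) ∨
    ((b,a) ∈ E ∧ (b,c) ∈ E ∧ (a,b) ∉ E ∧ (c,b) ∉ E ∧ (a,c) ∉ E ∧ (c,a) ∉ E) ∨
    ((c,a) ∈ E ∧ (c,b) ∈ E ∧ (a,c) ∉ E ∧ (b,c) ∉ E ∧ (a,b) ∉ E ∧ (b,a) ∉ E) := by
  obtain ⟨f, hinj, hrange, harcs⟩ := h
  obtain ⟨i, hi⟩ : a ∈ Set.range f := by rw [hrange]; simp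
  obtain ⟨j, hj⟩ : b ∈ Set.range f := by rw [hrange]; simp
  obtain ⟨k, hk⟩ : c ∈ Set.range f := by rw [hrange]; simp
  have hij : i ≠ j := fun e => hab (by rw [← hi, ← hj, e])
  have hik : i ≠ k := fun e => hac (by rw [← hi, ← hk, e])
  have hjk : j ≠ k := fun e => hbc (by rw [← hj, ← hk, e])
  have hmem : ∀ x y : Fin 3, x ≠ y → x = 0 → (f x, f y) ∈ E :=
    fun x y hxy hx => (harcs x y hxy).mpr hx
  have hnmem : ∀ x y : Fin 3, x ≠ y → x ≠ 0 → (f x, f y) ∉ E :=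
    fun x y hxy hx hm => hx ((harcs x y hxy).mp hm)
  have hcover : i = 0 ∨ j = 0 ∨ k = 0 := by
    clear harcs hinj hrange hi hj hk hmem hnmem
    fin_cases i <;> fin_cases j <;> fin_cases k <;> simp_all
  subst hi hj hk
  rcases hcover with h0 | h0 | h0
  · subst h0
    exact Or.inl ⟨hmem 0 j hij rfl, hmem 0 k hik rfl, hnmem j 0 hij.symm hij.symm,
      hnmem k 0 hik.symm hik.symm, hnmem j k hjk hij.symm, hnmem k j hjk.symm hik.symm⟩
  · subst h0
    exact Or.inr (Or.inl ⟨hmem 0 i hij.symm rfl, hmem 0 k hjk rfl, hnmem i 0 hij hij,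
      hnmem k 0 hjk.symm hjk.symm, hnmem i k hik hij, hnmem k i hik.symm hjk.symm⟩)
  · subst h0
    exact Or.inr (Or.inr ⟨hmem 0 i hik.symm rfl, hmem 0 j hjk.symm rfl, hnmem i 0 hik hik,
      hnmem j 0 hjk hjk, hnmem i j hij hik, hnmem j i hij.symm hjk⟩)

set_option maxHeartbeats 2000000 in
/-- For any directed graph `D = (V, E)`, the 3-graph `G(D)` whose edges are the triples
inducing a copy of `S⃗₃` contains no copy of `K₄` and no copy of `C₅`. -/
theorem GD_K4_free_and_C5_free {V : Type*} (E : Set (V × V)) (hE : ∀ v : V, (v, v) ∉ E) :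
    (¬ ∃ f : Fin 4 → V, Function.Injective f ∧ ∀ e ∈ K4, CopyS3 E (f '' ↑e)) ∧
    (¬ ∃ f : Fin 5 → V, Function.Injective f ∧ ∀ e ∈ C5, CopyS3 E (f '' ↑e)) := by
  constructor
  · rintro ⟨f, hinj, hf⟩
    have hne : ∀ i j : Fin 4, i ≠ j → f i ≠ f j := fun i j h => hinj.ne h
    have key : ∀ a b c : Fin 4, ({a,b,c} : Finset (Fin 4)) ∈ K4 → a ≠ b → a ≠ c → b ≠ c →
        CopyS3 E ({f a, f b, f c} : Set V) := by
      intro a b c hm _ _ _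
      have := hf _ hm
      simpa [Set.image_insert_eq] using this
    have h1 := copyS3_cases E (hne 0 1 (by decide)) (hne 0 2 (by decide)) (hne 1 2 (by decide))
      (key 0 1 2 (by decide) (by decide) (by decide) (by decide))
    have h2 := copyS3_cases E (hne 0 1 (by decide)) (hne 0 3 (by decide)) (hne 1 3 (by decide))
      (key 0 1 3 (by decide) (by decide) (by decide) (by decide))
    have h3 := copyS3_cases E (hne 0 2 (by decide)) (hne 0 3 (by decide)) (hne 2 3 (by decide))
      (key 0 2 3 (by decide) (by decide) (by decide) (by decide))
    have h4 := copyS3_cases E (hne 1 2 (by decide)) (hne 1 3 (by decide)) (hne 2 3 (by decide))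
      (key 1 2 3 (by decide) (by decide) (by decide) (by decide))
    rcases h1 with h1|h1|h1 <;> rcases h2 with h2|h2|h2 <;> rcases h3 with h3|h3|h3 <;>
      rcases h4 with h4|h4|h4 <;> tauto
  · rintro ⟨f, hinj, hf⟩
    have hne : ∀ i j : Fin 5, i ≠ j → f i ≠ f j := fun i j h => hinj.ne h
    have key : ∀ a b c : Fin 5, ({a,b,c} : Finset (Fin 5)) ∈ C5 → a ≠ b → a ≠ c → b ≠ c →
        CopyS3 E ({f a, f b, f c} : Set V) := by
      intro a b c hm _ _ _
      have := hf _ hm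
      simpa [Set.image_insert_eq] using this
    have h1 := copyS3_cases E (hne 0 1 (by decide)) (hne 0 2 (by decide)) (hne 1 2 (by decide))
      (key 0 1 2 (by decide) (by decide) (by decide) (by decide))
    have h2 := copyS3_cases E (hne 1 2 (by decide)) (hne 1 3 (by decide)) (hne 2 3 (by decide))
      (key 1 2 3 (by decide) (by decide) (by decide) (by decide))
    have h3 := copyS3_cases E (hne 2 3 (by decide)) (hne 2 4 (by decide)) (hne 3 4 (by decide))
      (key 2 3 4 (by decide) (by decide) (by decide) (by decide))
    have h4 := copyS3_cases E (hne 3 4 (by decide)) (hne 3 0 (by decide)) (hne 4 0 (by decide))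
      (key 3 4 0 (by decide) (by decide) (by decide) (by decide))
    have h5 := copyS3_cases E (hne 4 0 (by decide)) (hne 4 1 (by decide)) (hne 0 1 (by decide))
      (key 4 0 1 (by decide) (by decide) (by decide) (by decide))
    rcases h1 with h1|h1|h1 <;> rcases h2 with h2|h2|h2 <;> rcases h3 with h3|h3|h3 <;>
      rcases h4 with h4|h4|h4 <;> rcases h5 with h5|h5|h5 <;> tauto
end
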